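/- arXiv:1911.01546 — 4 statements merged into one kernel-verified Lean document; each statement's English description precedes it below -/
import Mathlib

section
/- Let F and G be CDFs of nonnegative bounded random variables, α ∈ (0,1], and suppose ν_F = F⁻¹(α) and ν_G = G⁻¹(α) are maximizers in the CVaR variational formula for F and G respectively. Then |CVaR_α(F) - CVaR_α(G)| ≤ (1/α) ∫₀^{max(ν_F, ν_G)} |G(y) - F(y)| dy. -/
open MeasureTheory

/-- A CDF of a nonnegative bounded random variable, as a function. -/
def IsBoundedNonnegCDF (F : ℝ → ℝ) : Prop :=
  Monotone F ∧ (∀ x, F x ∈ Set.Icc (0:ℝ) 1) ∧ (∀ x < 0, F x = 0) ∧ ∃ B : ℝ, ∀ x ≥ B, F x = 1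

/-- Conditional value at risk via the Rockafellar–Uryasev variational formula,
using `E[(ν - X)⁺] = ∫₀^ν F(y) dy` for nonnegative variables. -/
noncomputable def cvar (α : ℝ) (F : ℝ → ℝ) : ℝ :=
  ⨆ ν : ℝ, (ν - α⁻¹ * ∫ y in (0:ℝ)..ν, F y)

lemma cvar_bddAbove (F : ℝ → ℝ) (hF : IsBoundedNonnegCDF F)
    (α : ℝ) (hα : α ∈ Set.Ioc (0:ℝ) 1) :
    BddAbove (Set.range fun ν : ℝ => ν - α⁻¹ * ∫ y in (0:ℝ)..ν, F y) := by
  obtain ⟨hmono, hrange, _, B, hB⟩ := hF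
  have hα1 : (1:ℝ) ≤ α⁻¹ := (one_le_inv_iff₀).2 ⟨hα.1, hα.2⟩
  have hα0 : (0:ℝ) ≤ α⁻¹ := le_trans zero_le_one hα1
  set C := max B 0 with hC
  have hC0 : (0:ℝ) ≤ C := le_max_right _ _
  refine ⟨C, ?_⟩
  rintro x ⟨ν, rfl⟩
  dsimp only
  have hint : ∀ a b : ℝ, IntervalIntegrable F volume a b := fun a b =>
    hmono.intervalIntegrable
  by_cases hν : ν ≤ C
  · by_cases hν0 : 0 ≤ ν
    · have : 0 ≤ ∫ y in (0:ℝ)..ν, F y :=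
        intervalIntegral.integral_nonneg hν0 (fun y _ => (hrange y).1)
      nlinarith
    · push_neg at hν0
      -- ν < 0 : F = 0 a.e. on (ν, 0], so the integral vanishes
      obtain ⟨hmono', hrange', hneg', _⟩ := (⟨hmono, hrange, ‹∀ x < 0, F x = 0›, B, hB⟩ :
        IsBoundedNonnegCDF F)
      have h0 : ∀ᵐ y : ℝ, y ≠ 0 := by
        rw [MeasureTheory.ae_iff]
        simp
      have hzero : ∫ y in (0:ℝ)..ν, F y = 0 := by
        have hae : ∀ᵐ y ∂(volume : Measure ℝ), y ∈ Set.uIoc (0:ℝ) ν → F y = (0:ℝ) := by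
          filter_upwards [h0] with y hy hmem
          rw [Set.uIoc_of_ge hν0.le] at hmem
          exact hneg' y (lt_of_le_of_ne hmem.2 hy)
        rw [intervalIntegral.integral_congr_ae hae]
        simp
      rw [hzero]
      simpa using hν0.le.trans hC0
  · push_neg at hν
    have hsplit : ∫ y in (0:ℝ)..ν, F y
        = (∫ y in (0:ℝ)..C, F y) + ∫ y in C..ν, F y :=
      (intervalIntegral.integral_add_adjacent_intervals (hint 0 C) (hint C ν)).symm
    have hone : ∫ y in C..ν, F y = ν - C := by
      have : ∫ y in C..ν, F y = ∫ y in C..ν, (1:ℝ) := by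
        apply intervalIntegral.integral_congr
        intro y hy
        rw [Set.uIcc_of_le hν.le] at hy
        exact hB y (le_trans (le_max_left _ _) hy.1)
      simp [this]
    have hCnn : 0 ≤ ∫ y in (0:ℝ)..C, F y :=
      intervalIntegral.integral_nonneg hC0 (fun y _ => (hrange y).1)
    rw [hsplit, hone]
    nlinarith

lemma cvar_half (F G : ℝ → ℝ)
    (hF : IsBoundedNonnegCDF F) (hG : IsBoundedNonnegCDF G)
    (α : ℝ) (hα : α ∈ Set.Ioc (0:ℝ) 1)
    (νG : ℝ) (hνG0 : 0 ≤ νG)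
    (hνG : cvar α G = νG - α⁻¹ * ∫ y in (0:ℝ)..νG, G y) :
    cvar α G - cvar α F ≤ α⁻¹ * ∫ y in (0:ℝ)..νG, |G y - F y| := by
  have hα0 : (0:ℝ) ≤ α⁻¹ := inv_nonneg.2 hα.1.le
  have hFle : νG - α⁻¹ * ∫ y in (0:ℝ)..νG, F y ≤ cvar α F :=
    le_ciSup (cvar_bddAbove F hF α hα) νG
  have hintF : IntervalIntegrable F volume 0 νG := hF.1.intervalIntegrable
  have hintG : IntervalIntegrable G volume 0 νG := hG.1.intervalIntegrable
  have hmono : ∫ y in (0:ℝ)..νG, (F y - G y) ≤ ∫ y in (0:ℝ)..νG, |G y - F y| := by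
    apply intervalIntegral.integral_mono_on hνG0 (hintF.sub hintG)
      ((hintG.sub hintF).abs)
    intro y _
    rw [abs_sub_comm]
    exact le_abs_self _
  have hsub : ∫ y in (0:ℝ)..νG, (F y - G y)
      = (∫ y in (0:ℝ)..νG, F y) - ∫ y in (0:ℝ)..νG, G y :=
    intervalIntegral.integral_sub hintF hintG
  rw [hνG]
  nlinarith [mul_le_mul_of_nonneg_left hmono hα0]

theorem cvar_diff_le_l1 (F G : ℝ → ℝ)
    (hF : IsBoundedNonnegCDF F) (hG : IsBoundedNonnegCDF G)
    (α : ℝ) (hα : α ∈ Set.Ioc (0:ℝ) 1)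
    (νF νG : ℝ) (hνF0 : 0 ≤ νF) (hνG0 : 0 ≤ νG)
    (hνF : cvar α F = νF - α⁻¹ * ∫ y in (0:ℝ)..νF, F y)
    (hνG : cvar α G = νG - α⁻¹ * ∫ y in (0:ℝ)..νG, G y) :
    |cvar α F - cvar α G| ≤ α⁻¹ * ∫ y in (0:ℝ)..(max νF νG), |G y - F y| := by
  have hα0 : (0:ℝ) ≤ α⁻¹ := inv_nonneg.2 hα.1.le
  have habs : ∀ a b : ℝ, IntervalIntegrable (fun y => |G y - F y|) volume a b :=
    fun a b => ((hG.1.intervalIntegrable).sub (hF.1.intervalIntegrable)).abs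
  -- extend integral from ν to max νF νG
  have hext : ∀ ν : ℝ, 0 ≤ ν → ν ≤ max νF νG →
      ∫ y in (0:ℝ)..ν, |G y - F y| ≤ ∫ y in (0:ℝ)..(max νF νG), |G y - F y| := by
    intro ν hν0 hνm
    have h1 : ∫ y in (0:ℝ)..(max νF νG), |G y - F y|
        = (∫ y in (0:ℝ)..ν, |G y - F y|) + ∫ y in ν..(max νF νG), |G y - F y| :=
      (intervalIntegral.integral_add_adjacent_intervals (habs 0 ν) (habs ν _)).symm
    have h2 : 0 ≤ ∫ y in ν..(max νF νG), |G y - F y| :=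
      intervalIntegral.integral_nonneg hνm (fun y _ => abs_nonneg _)
    linarith
  have hFG : ∫ y in (0:ℝ)..νF, |G y - F y| ≤ ∫ y in (0:ℝ)..(max νF νG), |G y - F y| :=
    hext νF hνF0 (le_max_left _ _)
  have hGF : ∫ y in (0:ℝ)..νG, |G y - F y| ≤ ∫ y in (0:ℝ)..(max νF νG), |G y - F y| :=
    hext νG hνG0 (le_max_right _ _)
  rw [abs_sub_le_iff]
  constructor
  · have h := cvar_half G F hG hF α hα νF hνF0 (by
      have : ∀ y, |F y - G y| = |G y - F y| := fun y => abs_sub_comm _ _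
      exact hνF)
    -- cvar_half G F gives: cvar α F - cvar α G ≤ α⁻¹ * ∫ |F - G|
    calc cvar α F - cvar α G ≤ α⁻¹ * ∫ y in (0:ℝ)..νF, |F y - G y| := h
      _ = α⁻¹ * ∫ y in (0:ℝ)..νF, |G y - F y| := by
          congr 1; apply intervalIntegral.integral_congr; intro y _; exact abs_sub_comm _ _
      _ ≤ _ := mul_le_mul_of_nonneg_left hFG hα0
  · calc cvar α G - cvar α F ≤ α⁻¹ * ∫ y in (0:ℝ)..νG, |G y - F y| :=
        cvar_half F G hF hG α hα νG hνG0 hνG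
      _ ≤ _ := mul_le_mul_of_nonneg_left hGF hα0
end

section
/- Under the hypotheses of the previous CVaR comparison, |CVaR_α(F) - CVaR_α(G)| ≤ (max(F⁻¹(α), G⁻¹(α)) / α) · sup_x |F(x) - G(x)|. -/
open MeasureTheory

lemma cvar_aux_bdd (H : ℝ → ℝ) (hH : IsBoundedNonnegCDF H) (α : ℝ)
    (hα : α ∈ Set.Ioc (0:ℝ) 1) :
    BddAbove (Set.range fun ν : ℝ => ν - α⁻¹ * ∫ y in (0:ℝ)..ν, H y) := by
  obtain ⟨hmono, hIcc, hneg, B, hB⟩ := hH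
  have hα0 : 0 < α := hα.1
  have hαinv1 : 1 ≤ α⁻¹ := (one_le_inv₀ hα0).mpr hα.2
  have hint : ∀ a b : ℝ, IntervalIntegrable H volume a b := fun a b =>
    (hmono.monotoneOn _).intervalIntegrable
  set B' : ℝ := max B 0 with hB'
  have hB'0 : 0 ≤ B' := le_max_right _ _
  refine ⟨B', ?_⟩
  rintro _ ⟨ν, rfl⟩
  rcases lt_or_ge ν 0 with h1 | h1
  · have hzero : (∫ y in (0:ℝ)..ν, H y) = 0 := by
      rw [intervalIntegral.integral_symm]
      have : (∫ y in ν..(0:ℝ), H y) = ∫ y in ν..(0:ℝ), (0:ℝ) := by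
        apply intervalIntegral.integral_congr_ae
        have hne : ∀ᵐ y : ℝ, y ≠ (0:ℝ) := by simp [ae_iff, measure_singleton]
        filter_upwards [hne] with y hy hmem
        rw [Set.uIoc_of_le h1.le] at hmem
        exact hneg y (lt_of_le_of_ne hmem.2 hy)
      simp [this]
    simp only [hzero, mul_zero, sub_zero]
    linarith
  · rcases le_or_gt ν B' with h2 | h2
    · have hint0 : 0 ≤ ∫ y in (0:ℝ)..ν, H y :=
        intervalIntegral.integral_nonneg h1 (fun y _ => (hIcc y).1)
      nlinarith [mul_nonneg (le_trans zero_le_one hαinv1) hint0]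
    · have hsplit : (∫ y in (0:ℝ)..B', H y) + (∫ y in B'..ν, H y)
          = ∫ y in (0:ℝ)..ν, H y :=
        intervalIntegral.integral_add_adjacent_intervals (hint _ _) (hint _ _)
      have htail : (∫ y in B'..ν, H y) = ν - B' := by
        have : (∫ y in B'..ν, H y) = ∫ y in B'..ν, (1:ℝ) := by
          apply intervalIntegral.integral_congr
          intro y hy
          rw [Set.uIcc_of_le h2.le] at hy
          exact hB y (le_trans (le_max_left _ _) hy.1)
        simp [this]
      have hint0 : 0 ≤ ∫ y in (0:ℝ)..B', H y :=
        intervalIntegral.integral_nonneg hB'0 (fun y _ => (hIcc y).1)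
      have : (∫ y in (0:ℝ)..ν, H y) ≥ ν - B' := by linarith
      nlinarith [mul_le_mul hαinv1 this (by linarith) (le_trans zero_le_one hαinv1)]

theorem cvar_diff_le_ks (F G : ℝ → ℝ)
    (hF : IsBoundedNonnegCDF F) (hG : IsBoundedNonnegCDF G)
    (α : ℝ) (hα : α ∈ Set.Ioc (0:ℝ) 1)
    (νF νG : ℝ) (hνF0 : 0 ≤ νF) (hνG0 : 0 ≤ νG)
    (hνF : cvar α F = νF - α⁻¹ * ∫ y in (0:ℝ)..νF, F y)
    (hνG : cvar α G = νG - α⁻¹ * ∫ y in (0:ℝ)..νG, G y) :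
    |cvar α F - cvar α G| ≤ (max νF νG / α) * ⨆ x : ℝ, |F x - G x| := by
  have hα0 : 0 < α := hα.1
  set D : ℝ := ⨆ x : ℝ, |F x - G x| with hD
  have hbdd : BddAbove (Set.range fun x : ℝ => |F x - G x|) := by
    refine ⟨1, ?_⟩
    rintro _ ⟨x, rfl⟩
    have h1 := hF.2.1 x
    have h2 := hG.2.1 x
    rw [abs_le]
    constructor <;> [linarith [h1.1, h2.2]; linarith [h1.2, h2.1]]
  have hkey : ∀ x, |F x - G x| ≤ D := fun x => le_ciSup hbdd x
  have hD0 : 0 ≤ D := le_trans (abs_nonneg _) (hkey 0)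
  have hintF : ∀ a b : ℝ, IntervalIntegrable F volume a b := fun a b =>
    (hF.1.monotoneOn _).intervalIntegrable
  have hintG : ∀ a b : ℝ, IntervalIntegrable G volume a b := fun a b =>
    (hG.1.monotoneOn _).intervalIntegrable
  have hleF : ∀ ν : ℝ, ν - α⁻¹ * ∫ y in (0:ℝ)..ν, F y ≤ cvar α F := fun ν =>
    le_ciSup (cvar_aux_bdd F hF α hα) ν
  have hleG : ∀ ν : ℝ, ν - α⁻¹ * ∫ y in (0:ℝ)..ν, G y ≤ cvar α G := fun ν =>
    le_ciSup (cvar_aux_bdd G hG α hα) ν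
  have hbound : ∀ ν : ℝ, 0 ≤ ν →
      (∫ y in (0:ℝ)..ν, G y) - (∫ y in (0:ℝ)..ν, F y) ≤ ν * D := by
    intro ν hν
    have h1 : (∫ y in (0:ℝ)..ν, G y) - (∫ y in (0:ℝ)..ν, F y)
        = ∫ y in (0:ℝ)..ν, (G y - F y) :=
      (intervalIntegral.integral_sub (hintG _ _) (hintF _ _)).symm
    rw [h1]
    calc (∫ y in (0:ℝ)..ν, (G y - F y)) ≤ ∫ y in (0:ℝ)..ν, D := by
          apply intervalIntegral.integral_mono_on hν
            ((hintG _ _).sub (hintF _ _)) intervalIntegrable_const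
          intro y _
          have := hkey y
          rw [abs_sub_comm] at this
          exact le_trans (le_abs_self _) this
      _ = ν * D := by simp [mul_comm]
  have hbound' : ∀ ν : ℝ, 0 ≤ ν →
      (∫ y in (0:ℝ)..ν, F y) - (∫ y in (0:ℝ)..ν, G y) ≤ ν * D := by
    intro ν hν
    have h1 : (∫ y in (0:ℝ)..ν, F y) - (∫ y in (0:ℝ)..ν, G y)
        = ∫ y in (0:ℝ)..ν, (F y - G y) :=
      (intervalIntegral.integral_sub (hintF _ _) (hintG _ _)).symm
    rw [h1]
    calc (∫ y in (0:ℝ)..ν, (F y - G y)) ≤ ∫ y in (0:ℝ)..ν, D := by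
          apply intervalIntegral.integral_mono_on hν
            ((hintF _ _).sub (hintG _ _)) intervalIntegrable_const
          intro y _
          exact le_trans (le_abs_self _) (hkey y)
      _ = ν * D := by simp [mul_comm]
  have hmaxF : νF ≤ max νF νG := le_max_left _ _
  have hmaxG : νG ≤ max νF νG := le_max_right _ _
  have hαinv0 : 0 ≤ α⁻¹ := (inv_pos.mpr hα0).le
  rw [abs_le]
  constructor
  · -- cvar α G - cvar α F ≤ RHS
    have h1 := hleF νG
    have h2 := hbound' νG hνG0
    have h3 : max νF νG / α * D = α⁻¹ * (max νF νG * D) := by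
      rw [div_eq_inv_mul, mul_assoc]
    rw [neg_le, neg_sub]
    calc cvar α G - cvar α F
        ≤ (νG - α⁻¹ * ∫ y in (0:ℝ)..νG, G y) - (νG - α⁻¹ * ∫ y in (0:ℝ)..νG, F y) := by
          rw [hνG]; linarith
      _ = α⁻¹ * ((∫ y in (0:ℝ)..νG, F y) - ∫ y in (0:ℝ)..νG, G y) := by ring
      _ ≤ α⁻¹ * (νG * D) := by
          exact mul_le_mul_of_nonneg_left (hbound' νG hνG0) hαinv0
      _ ≤ max νF νG / α * D := by
          rw [h3]
          exact mul_le_mul_of_nonneg_left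
            (mul_le_mul_of_nonneg_right hmaxG hD0) hαinv0
  · have h3 : max νF νG / α * D = α⁻¹ * (max νF νG * D) := by
      rw [div_eq_inv_mul, mul_assoc]
    calc cvar α F - cvar α G
        ≤ (νF - α⁻¹ * ∫ y in (0:ℝ)..νF, F y) - (νF - α⁻¹ * ∫ y in (0:ℝ)..νF, G y) := by
          rw [hνF]; linarith [hleG νF]
      _ = α⁻¹ * ((∫ y in (0:ℝ)..νF, G y) - ∫ y in (0:ℝ)..νF, F y) := by ring
      _ ≤ α⁻¹ * (νF * D) := by
          exact mul_le_mul_of_nonneg_left (hbound νF hνF0) hαinv0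
      _ ≤ max νF νG / α * D := by
          rw [h3]
          exact mul_le_mul_of_nonneg_left
            (mul_le_mul_of_nonneg_right hmaxF hD0) hαinv0
end

section
/- Let {Fₙ} be a sequence of CDFs of random variables supported on [Vmin, Vmax] with Vmin ≥ 0, converging to a CDF F in the L² distance ∫ (Fₙ(x) - F(x))² dx → 0. Then for each fixed α ∈ (0,1], CVaR_α(Fₙ) → CVaR_α(F). -/
open MeasureTheory

/-- An interval integral vanishes if the integrand vanishes on `Ico a b`. -/
lemma integral_eq_zero_of_Ico {f : ℝ → ℝ} {a b : ℝ} (hab : a ≤ b)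
    (h : ∀ x ∈ Set.Ico a b, f x = 0) : ∫ x in a..b, f x = 0 := by
  rw [intervalIntegral.integral_of_le hab, integral_Ioc_eq_integral_Ioo]
  rw [setIntegral_congr_fun measurableSet_Ioo
    (fun x hx => h x ⟨le_of_lt hx.1, hx.2⟩ : Set.EqOn f (fun _ => (0:ℝ)) (Set.Ioo a b))]
  simp

/-- Comparison of suprema of uniformly close functions. -/
lemma abs_ciSup_sub_ciSup {f g : ℝ → ℝ} (hf : BddAbove (Set.range f))
    (hg : BddAbove (Set.range g)) {δ : ℝ} (h : ∀ x, |f x - g x| ≤ δ) :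
    |(⨆ x, f x) - ⨆ x, g x| ≤ δ := by
  rw [abs_sub_le_iff]
  constructor
  · rw [sub_le_iff_le_add]
    refine ciSup_le fun x => ?_
    have := (abs_sub_le_iff.1 (h x)).1
    have hx : g x ≤ ⨆ x, g x := le_ciSup hg x
    linarith
  · rw [sub_le_iff_le_add]
    refine ciSup_le fun x => ?_
    have := (abs_sub_le_iff.1 (h x)).2
    have hx : f x ≤ ⨆ x, f x := le_ciSup hf x
    linarith

/-- The Rockafellar–Uryasev objective is bounded above by `Vmax`. -/
lemma obj_le_Vmax {Vmin Vmax : ℝ} (hVmin : 0 ≤ Vmin) (hV : Vmin ≤ Vmax) {α : ℝ}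
    (hα0 : 0 < α) (hα1 : α ≤ 1) {F : ℝ → ℝ} (hmono : Monotone F)
    (h01 : ∀ x, F x ∈ Set.Icc (0:ℝ) 1) (h0 : ∀ x < 0, F x = 0)
    (h1 : ∀ x ≥ Vmax, F x = 1) (ν : ℝ) :
    ν - α⁻¹ * ∫ y in (0:ℝ)..ν, F y ≤ Vmax := by
  have hαinv0 : (0:ℝ) ≤ α⁻¹ := le_of_lt (inv_pos.2 hα0)
  have hαinv1 : (1:ℝ) ≤ α⁻¹ := by nlinarith [inv_pos.2 hα0, mul_inv_cancel₀ (ne_of_gt hα0)]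
  rcases le_or_gt ν 0 with hν | hν
  · have hz : ∫ y in (0:ℝ)..ν, F y = 0 := by
      rw [intervalIntegral.integral_symm]
      rw [integral_eq_zero_of_Ico hν (fun x hx => h0 x hx.2)]
      simp
    rw [hz]
    simp only [mul_zero, sub_zero]
    linarith
  rcases le_or_gt ν Vmax with h2 | h2
  · have hnn : 0 ≤ ∫ y in (0:ℝ)..ν, F y :=
      intervalIntegral.integral_nonneg hν.le (fun x _ => (h01 x).1)
    nlinarith
  · have hsplit : ∫ y in (0:ℝ)..ν, F y
        = (∫ y in (0:ℝ)..Vmax, F y) + ∫ y in Vmax..ν, F y :=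
      (intervalIntegral.integral_add_adjacent_intervals
        (hmono.intervalIntegrable) (hmono.intervalIntegrable)).symm
    have hone : ∫ y in Vmax..ν, F y = ν - Vmax := by
      rw [intervalIntegral.integral_congr (g := fun _ => (1:ℝ))
        (fun x hx => h1 x (by
          rcases Set.mem_uIcc.1 hx with h | h
          · exact h.1
          · linarith [h.1, h.2]))]
      simp
    have hnn : 0 ≤ ∫ y in (0:ℝ)..Vmax, F y :=
      intervalIntegral.integral_nonneg (le_trans hVmin hV) (fun x _ => (h01 x).1)
    have hkey : (ν - Vmax) ≤ α⁻¹ * (ν - Vmax) :=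
      le_mul_of_one_le_left (by linarith) hαinv1
    rw [hsplit]
    nlinarith

/-- Bound on the integral of the difference of two CDFs supported on `[Vmin, Vmax]`. -/
lemma int_diff_bound {Vmin Vmax : ℝ} (hVmin : 0 ≤ Vmin) (hV : Vmin ≤ Vmax)
    {F G : ℝ → ℝ} (hFm : Monotone F) (hGm : Monotone G)
    (hF0 : ∀ x < Vmin, F x = 0) (hG0 : ∀ x < Vmin, G x = 0)
    (hF1 : ∀ x ≥ Vmax, F x = 1) (hG1 : ∀ x ≥ Vmax, G x = 1) (ν : ℝ) :
    |∫ y in (0:ℝ)..ν, (F y - G y)| ≤ ∫ x in Vmin..Vmax, |F x - G x| := by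
  have hint : ∀ a b : ℝ, IntervalIntegrable (fun x => F x - G x) volume a b :=
    fun a b => (hFm.intervalIntegrable).sub (hGm.intervalIntegrable)
  have hintabs : ∀ a b : ℝ, IntervalIntegrable (fun x => |F x - G x|) volume a b :=
    fun a b => (hint a b).abs
  have hDnn : 0 ≤ ∫ x in Vmin..Vmax, |F x - G x| :=
    intervalIntegral.integral_nonneg hV (fun x _ => abs_nonneg _)
  rcases le_or_gt ν 0 with hν | hν
  · have hz : ∫ y in (0:ℝ)..ν, (F y - G y) = 0 := by
      rw [intervalIntegral.integral_symm]
      rw [integral_eq_zero_of_Ico hν (fun x hx => by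
        rw [hF0 x (lt_of_lt_of_le hx.2 hVmin), hG0 x (lt_of_lt_of_le hx.2 hVmin), sub_zero])]
      simp
    rw [hz]
    simpa using hDnn
  · set b := max ν Vmax with hb
    have hνb : ν ≤ b := le_max_left _ _
    have hVb : Vmax ≤ b := le_max_right _ _
    have h0b : (0:ℝ) ≤ b := le_trans hν.le hνb
    have step1 : |∫ y in (0:ℝ)..ν, (F y - G y)| ≤ ∫ y in (0:ℝ)..ν, |F y - G y| :=
      intervalIntegral.abs_integral_le_integral_abs hν.le
    have step2 : (∫ y in (0:ℝ)..ν, |F y - G y|) ≤ ∫ y in (0:ℝ)..b, |F y - G y| := by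
      have hadd : (∫ y in (0:ℝ)..ν, |F y - G y|) + ∫ y in ν..b, |F y - G y|
          = ∫ y in (0:ℝ)..b, |F y - G y| :=
        intervalIntegral.integral_add_adjacent_intervals (hintabs _ _) (hintabs _ _)
      have h2 : 0 ≤ ∫ y in ν..b, |F y - G y| :=
        intervalIntegral.integral_nonneg hνb (fun x _ => abs_nonneg (F x - G x))
      linarith
    have step3 : (∫ y in (0:ℝ)..b, |F y - G y|) = ∫ x in Vmin..Vmax, |F x - G x| := by
      have hadd1 : (∫ y in (0:ℝ)..Vmin, |F y - G y|) + ∫ y in Vmin..b, |F y - G y|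
          = ∫ y in (0:ℝ)..b, |F y - G y| :=
        intervalIntegral.integral_add_adjacent_intervals (hintabs _ _) (hintabs _ _)
      have hadd2 : (∫ y in Vmin..Vmax, |F y - G y|) + ∫ y in Vmax..b, |F y - G y|
          = ∫ y in Vmin..b, |F y - G y| :=
        intervalIntegral.integral_add_adjacent_intervals (hintabs _ _) (hintabs _ _)
      have hz1 : ∫ y in (0:ℝ)..Vmin, |F y - G y| = 0 :=
        integral_eq_zero_of_Ico hVmin (fun x hx => by
          rw [hF0 x hx.2, hG0 x hx.2]; simp)
      have hz2 : ∫ y in Vmax..b, |F y - G y| = 0 := by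
        rw [intervalIntegral.integral_congr (g := fun _ => (0:ℝ))
          (fun x hx => by
            have hx' : Vmax ≤ x := by
              rcases Set.mem_uIcc.1 hx with h | h
              · exact h.1
              · linarith [h.1, h.2]
            rw [hF1 x hx', hG1 x hx']; simp)]
        simp
      linarith
    linarith

open Filter in
theorem cvar_continuous_in_l2 (Vmin Vmax : ℝ) (hVmin : 0 ≤ Vmin) (hV : Vmin ≤ Vmax)
    (F : ℕ → ℝ → ℝ) (G : ℝ → ℝ)
    (hF : ∀ n, IsBoundedNonnegCDF (F n)) (hG : IsBoundedNonnegCDF G)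
    (hFsupp : ∀ n, (∀ x < Vmin, F n x = 0) ∧ (∀ x ≥ Vmax, F n x = 1))
    (hGsupp : (∀ x < Vmin, G x = 0) ∧ (∀ x ≥ Vmax, G x = 1))
    (hconv : Tendsto (fun n => ∫ x in Vmin..Vmax, (F n x - G x) ^ 2) atTop (nhds 0))
    (α : ℝ) (hα : α ∈ Set.Ioc (0:ℝ) 1) :
    Tendsto (fun n => cvar α (F n)) atTop (nhds (cvar α G)) := by
  obtain ⟨hα0, hα1⟩ := hα
  have hαinv0 : (0:ℝ) ≤ α⁻¹ := le_of_lt (inv_pos.2 hα0)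
  set D : ℕ → ℝ := fun n => ∫ x in Vmin..Vmax, |F n x - G x| with hD
  have hDnn : ∀ n, 0 ≤ D n :=
    fun n => intervalIntegral.integral_nonneg hV (fun x _ => abs_nonneg _)
  -- Step 1: |cvar α (F n) - cvar α G| ≤ α⁻¹ * D n
  have hmain : ∀ n, |cvar α (F n) - cvar α G| ≤ α⁻¹ * D n := by
    intro n
    obtain ⟨hFm, hF01, hFz, _⟩ := hF n
    obtain ⟨hGm, hG01, hGz, _⟩ := hG
    obtain ⟨hFs0, hFs1⟩ := hFsupp n
    obtain ⟨hGs0, hGs1⟩ := hGsupp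
    have bddF : BddAbove (Set.range fun ν : ℝ => ν - α⁻¹ * ∫ y in (0:ℝ)..ν, F n y) :=
      ⟨Vmax, Set.forall_mem_range.2 fun ν =>
        obj_le_Vmax hVmin hV hα0 hα1 hFm hF01 hFz hFs1 ν⟩
    have bddG : BddAbove (Set.range fun ν : ℝ => ν - α⁻¹ * ∫ y in (0:ℝ)..ν, G y) :=
      ⟨Vmax, Set.forall_mem_range.2 fun ν =>
        obj_le_Vmax hVmin hV hα0 hα1 hGm hG01 hGz hGs1 ν⟩
    refine abs_ciSup_sub_ciSup bddF bddG fun ν => ?_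
    have hsub : (∫ y in (0:ℝ)..ν, F n y) - ∫ y in (0:ℝ)..ν, G y
        = ∫ y in (0:ℝ)..ν, (F n y - G y) :=
      (intervalIntegral.integral_sub hFm.intervalIntegrable hGm.intervalIntegrable).symm
    have heq : (ν - α⁻¹ * ∫ y in (0:ℝ)..ν, F n y) - (ν - α⁻¹ * ∫ y in (0:ℝ)..ν, G y)
        = -(α⁻¹ * ∫ y in (0:ℝ)..ν, (F n y - G y)) := by
      rw [← hsub]; ring
    rw [heq, abs_neg, abs_mul, abs_of_nonneg hαinv0]
    exact mul_le_mul_of_nonneg_left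
      (int_diff_bound hVmin hV hFm hGm hFs0 hGs0 hFs1 hGs1 ν) hαinv0
  -- Step 2: D n → 0
  have hDconv : Tendsto D atTop (nhds 0) := by
    have hL : 0 ≤ Vmax - Vmin := by linarith
    refine Metric.tendsto_atTop.2 fun ε hε => ?_
    set c : ℝ := ε / (2 * (Vmax - Vmin + 1)) with hc
    have hc0 : 0 < c := div_pos hε (by linarith)
    obtain ⟨N, hN⟩ := Metric.tendsto_atTop.1 hconv (c * ε) (mul_pos hc0 hε)
    refine ⟨N, fun n hn => ?_⟩
    obtain ⟨hFm, hF01, _, _⟩ := hF n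
    obtain ⟨hGm, hG01, _, _⟩ := hG
    have hSn := hN n hn
    rw [Real.dist_eq, sub_zero] at hSn
    have hSn' : (∫ x in Vmin..Vmax, (F n x - G x) ^ 2) < c * ε :=
      lt_of_le_of_lt (le_abs_self _) hSn
    -- integrability of the square
    have hsq : IntervalIntegrable (fun x => (F n x - G x) ^ 2) volume Vmin Vmax := by
      rw [intervalIntegrable_iff_integrableOn_Ioc_of_le hV]
      refine Measure.integrableOn_of_bounded (M := 1) measure_Ioc_lt_top.ne
        (((hFm.measurable.sub hGm.measurable).pow_const 2).aestronglyMeasurable) ?_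
      refine ae_of_all _ fun x => ?_
      have h1 := (hF01 x).1; have h2 := (hF01 x).2
      have h3 := (hG01 x).1; have h4 := (hG01 x).2
      rw [Real.norm_eq_abs, abs_of_nonneg (sq_nonneg _)]
      nlinarith
    have hintabs : IntervalIntegrable (fun x => |F n x - G x|) volume Vmin Vmax :=
      ((hFm.intervalIntegrable).sub (hGm.intervalIntegrable)).abs
    -- pointwise AM–GM bound
    have hmono : D n ≤ ∫ x in Vmin..Vmax, ((F n x - G x) ^ 2 / (2 * c) + c / 2) := by
      refine intervalIntegral.integral_mono_on hV hintabs
        ((hsq.div_const _).add (intervalIntegrable_const)) fun x _ => ?_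
      have h := sq_nonneg (|F n x - G x| - c)
      have habs : |F n x - G x| ^ 2 = (F n x - G x) ^ 2 := sq_abs _
      rw [div_add' _ _ _ (by positivity), le_div_iff₀ (by positivity)]
      nlinarith
    have hval : (∫ x in Vmin..Vmax, ((F n x - G x) ^ 2 / (2 * c) + c / 2))
        = (∫ x in Vmin..Vmax, (F n x - G x) ^ 2) / (2 * c) + (Vmax - Vmin) * (c / 2) := by
      rw [intervalIntegral.integral_add (hsq.div_const _) intervalIntegrable_const,
        intervalIntegral.integral_div, intervalIntegral.integral_const, smul_eq_mul]
    have hbound1 : (∫ x in Vmin..Vmax, (F n x - G x) ^ 2) / (2 * c) < ε / 2 := by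
      rw [div_lt_iff₀ (by positivity)]
      calc (∫ x in Vmin..Vmax, (F n x - G x) ^ 2) < c * ε := hSn'
        _ ≤ ε / 2 * (2 * c) := by ring_nf; nlinarith
    have hbound2 : (Vmax - Vmin) * (c / 2) < ε / 2 := by
      have hne : (2 * (Vmax - Vmin + 1)) ≠ 0 := by positivity
      have hce : c * (2 * (Vmax - Vmin + 1)) = ε := by rw [hc]; field_simp
      nlinarith [hc0, hL]
    rw [Real.dist_eq, sub_zero, abs_of_nonneg (hDnn n)]
    calc D n ≤ _ := hmono
      _ = _ := hval
      _ < ε / 2 + ε / 2 := by linarith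
      _ = ε := by ring
  -- Step 3: conclude
  rw [tendsto_iff_dist_tendsto_zero]
  have hlim : Tendsto (fun n => α⁻¹ * D n) atTop (nhds 0) := by
    simpa using hDconv.const_mul α⁻¹
  refine squeeze_zero (fun n => dist_nonneg) (fun n => ?_) hlim
  rw [Real.dist_eq]
  exact hmain n
end

section
/- Let F and G be CDFs of random variables supported on [0, Vmax] with F(x) ≥ G(x) for all x, and let α ∈ (0,1]. Then 0 ≤ CVaR_α(G) - CVaR_α(F) ≤ (Vmax/α) · sup_x (F(x) - G(x)). -/
open MeasureTheory

section helpers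
variable {H : ℝ → ℝ}

lemma int_zero_of_nonpos (h0 : ∀ x < 0, H x = 0) {ν : ℝ} (hν : ν ≤ 0) :
    (∫ y in (0:ℝ)..ν, H y) = 0 := by
  rw [intervalIntegral.integral_symm, intervalIntegral.integral_of_le hν,
    integral_Ioc_eq_integral_Ioo]
  rw [setIntegral_congr_fun measurableSet_Ioo (g := fun _ => (0:ℝ))
    (fun x hx => h0 x hx.2)]
  simp

lemma int_tail {Vmax : ℝ} (hsupp : ∀ x ≥ Vmax, H x = 1) {ν : ℝ} (hνV : Vmax ≤ ν) :
    (∫ y in Vmax..ν, H y) = ν - Vmax := by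
  rw [intervalIntegral.integral_congr (g := fun _ => (1:ℝ))
    (fun x hx => hsupp x (by
      rcases hx with ⟨h1, h2⟩
      simpa [inf_eq_left.mpr hνV] using h1))]
  simp

/-- Upper bound Vmax on the RU objective. -/
lemma ru_le (Vmax : ℝ) (hVmax : 0 ≤ Vmax) (hm : Monotone H)
    (hbd : ∀ x, H x ∈ Set.Icc (0:ℝ) 1) (h0 : ∀ x < 0, H x = 0)
    (hsupp : ∀ x ≥ Vmax, H x = 1) {α : ℝ} (hα0 : 0 < α) (hα1 : α ≤ 1) (ν : ℝ) :
    ν - α⁻¹ * ∫ y in (0:ℝ)..ν, H y ≤ Vmax := by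
  have hαinv : (1:ℝ) ≤ α⁻¹ := (one_le_inv₀ hα0).mpr hα1
  rcases le_or_gt ν 0 with hν | hν
  · rw [int_zero_of_nonpos h0 hν]; simpa using hν.trans hVmax
  rcases le_or_gt ν Vmax with hνV | hνV
  · have : (0:ℝ) ≤ ∫ y in (0:ℝ)..ν, H y :=
      intervalIntegral.integral_nonneg hν.le (fun x _ => (hbd x).1)
    nlinarith [mul_nonneg (le_trans zero_le_one hαinv) this]
  · have hsplit : (∫ y in (0:ℝ)..ν, H y)
        = (∫ y in (0:ℝ)..Vmax, H y) + ∫ y in Vmax..ν, H y :=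
      (intervalIntegral.integral_add_adjacent_intervals
        (hm.intervalIntegrable) (hm.intervalIntegrable)).symm
    have h1 : (∫ y in Vmax..ν, H y) = ν - Vmax := int_tail hsupp hνV.le
    have h2 : (0:ℝ) ≤ ∫ y in (0:ℝ)..Vmax, H y :=
      intervalIntegral.integral_nonneg hVmax (fun x _ => (hbd x).1)
    rw [hsplit, h1]
    nlinarith [mul_le_mul_of_nonneg_right hαinv (sub_nonneg.mpr hνV.le)]

end helpers

theorem cvar_stochdom_bounds (Vmax : ℝ) (hVmax : 0 ≤ Vmax)
    (F G : ℝ → ℝ) (hF : IsBoundedNonnegCDF F) (hG : IsBoundedNonnegCDF G)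
    (hFsupp : ∀ x ≥ Vmax, F x = 1) (hGsupp : ∀ x ≥ Vmax, G x = 1)
    (hdom : ∀ x, G x ≤ F x)
    (α : ℝ) (hα : α ∈ Set.Ioc (0:ℝ) 1) :
    0 ≤ cvar α G - cvar α F ∧
      cvar α G - cvar α F ≤ (Vmax / α) * ⨆ x : ℝ, (F x - G x) := by
  obtain ⟨hα0, hα1⟩ := hα
  obtain ⟨Fm, Fbd, F0, -⟩ := hF
  obtain ⟨Gm, Gbd, G0, -⟩ := hG
  have hαinv0 : (0:ℝ) ≤ α⁻¹ := inv_nonneg.mpr hα0.le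
  -- the sup of the pointwise gap
  have hDbdd : BddAbove (Set.range fun x => F x - G x) := by
    refine ⟨1, ?_⟩; rintro _ ⟨x, rfl⟩
    have h1 := (Fbd x).2; have h2 := (Gbd x).1; dsimp; linarith
  set D : ℝ := ⨆ x : ℝ, (F x - G x) with hD
  have hDx : ∀ x, F x - G x ≤ D := fun x => le_ciSup hDbdd x
  have hD0 : (0:ℝ) ≤ D := le_trans (sub_nonneg.mpr (hdom 0)) (hDx 0)
  -- boundedness of the RU objectives
  have bddF : BddAbove (Set.range fun ν : ℝ => ν - α⁻¹ * ∫ y in (0:ℝ)..ν, F y) := by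
    refine ⟨Vmax, ?_⟩; rintro _ ⟨ν, rfl⟩
    exact ru_le Vmax hVmax Fm Fbd F0 hFsupp hα0 hα1 ν
  have bddG : BddAbove (Set.range fun ν : ℝ => ν - α⁻¹ * ∫ y in (0:ℝ)..ν, G y) := by
    refine ⟨Vmax, ?_⟩; rintro _ ⟨ν, rfl⟩
    exact ru_le Vmax hVmax Gm Gbd G0 hGsupp hα0 hα1 ν
  -- pointwise domination of objectives
  have lemA : ∀ ν : ℝ, (ν - α⁻¹ * ∫ y in (0:ℝ)..ν, F y)
      ≤ ν - α⁻¹ * ∫ y in (0:ℝ)..ν, G y := by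
    intro ν
    have hint : (∫ y in (0:ℝ)..ν, G y) ≤ ∫ y in (0:ℝ)..ν, F y := by
      rcases le_or_gt ν 0 with hν | hν
      · rw [int_zero_of_nonpos G0 hν, int_zero_of_nonpos F0 hν]
      · exact intervalIntegral.integral_mono_on hν.le Gm.intervalIntegrable
          Fm.intervalIntegrable (fun x _ => hdom x)
    have := mul_le_mul_of_nonneg_left hint hαinv0
    linarith
  -- key: difference of integrals is at most Vmax * D
  have hkey0 : ∀ b : ℝ, 0 ≤ b → b ≤ Vmax →
      (∫ y in (0:ℝ)..b, F y) - (∫ y in (0:ℝ)..b, G y) ≤ Vmax * D := by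
    intro b hb hbV
    rw [← intervalIntegral.integral_sub Fm.intervalIntegrable Gm.intervalIntegrable]
    have h1 : (∫ y in (0:ℝ)..b, (F y - G y)) ≤ ∫ y in (0:ℝ)..b, (fun _ => D) y :=
      intervalIntegral.integral_mono_on hb
        (Fm.intervalIntegrable.sub Gm.intervalIntegrable)
        intervalIntegrable_const (fun x _ => hDx x)
    have h2 : (∫ y in (0:ℝ)..b, (fun _ => D) y) = b * D := by simp [mul_comm]
    rw [h2] at h1
    exact h1.trans (mul_le_mul_of_nonneg_right hbV hD0)
  have hkey : ∀ ν : ℝ,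
      (∫ y in (0:ℝ)..ν, F y) - (∫ y in (0:ℝ)..ν, G y) ≤ Vmax * D := by
    intro ν
    rcases le_or_gt ν 0 with hν | hν
    · rw [int_zero_of_nonpos G0 hν, int_zero_of_nonpos F0 hν]
      simpa using mul_nonneg hVmax hD0
    rcases le_or_gt ν Vmax with hνV | hνV
    · exact hkey0 ν hν.le hνV
    · have hsplitF : (∫ y in (0:ℝ)..ν, F y)
          = (∫ y in (0:ℝ)..Vmax, F y) + ∫ y in Vmax..ν, F y :=
        (intervalIntegral.integral_add_adjacent_intervals
          Fm.intervalIntegrable Fm.intervalIntegrable).symm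
      have hsplitG : (∫ y in (0:ℝ)..ν, G y)
          = (∫ y in (0:ℝ)..Vmax, G y) + ∫ y in Vmax..ν, G y :=
        (intervalIntegral.integral_add_adjacent_intervals
          Gm.intervalIntegrable Gm.intervalIntegrable).symm
      rw [hsplitF, hsplitG, int_tail hFsupp hνV.le, int_tail hGsupp hνV.le]
      have := hkey0 Vmax hVmax le_rfl
      linarith
  -- pointwise bound in the other direction
  have lemB : ∀ ν : ℝ, (ν - α⁻¹ * ∫ y in (0:ℝ)..ν, G y)
      ≤ (ν - α⁻¹ * ∫ y in (0:ℝ)..ν, F y) + (Vmax / α) * D := by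
    intro ν
    have h1 := mul_le_mul_of_nonneg_left (hkey ν) hαinv0
    have h2 : (Vmax / α) * D = α⁻¹ * (Vmax * D) := by
      rw [div_eq_mul_inv]; ring
    rw [mul_sub] at h1
    linarith
  -- assemble
  have hFG : cvar α F ≤ cvar α G :=
    ciSup_le fun ν => (lemA ν).trans (le_ciSup bddG ν)
  have hGF : cvar α G ≤ cvar α F + (Vmax / α) * D :=
    ciSup_le fun ν => (lemB ν).trans (add_le_add_left (le_ciSup bddF ν) _)
  exact ⟨by linarith, by linarith⟩
end
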